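/- Let p = 1.409, q = 1/p. There is no configuration consisting of one point Y with p ≤ |Y| ≤ 1.85 and nine points X₁, …, X₉ with 1 ≤ |Xᵢ| ≤ 1.22, such that dist(Xᵢ, Xⱼ) ≥ q for all i ≠ j and dist(Y, Xᵢ) ≥ p for all i. -/

import Mathlib

open Real

noncomputable def cpx (x : EuclideanSpace ℝ (Fin 2)) : ℂ := ⟨x 0, x 1⟩

lemma cpx_abs (x : EuclideanSpace ℝ (Fin 2)) : ‖cpx x‖ = ‖x‖ := by
  rw [EuclideanSpace.norm_eq, Complex.norm_def, Complex.normSq_mk]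
  congr 1
  simp [Fin.sum_univ_two, Real.norm_eq_abs, sq_abs, cpx]
  ring

lemma cpx_dist (a b : EuclideanSpace ℝ (Fin 2)) :
    ‖cpx a - cpx b‖ = dist a b := by
  have h : cpx a - cpx b = cpx (a - b) := by
    apply Complex.ext <;> simp [cpx]
  rw [h, cpx_abs, dist_eq_norm]


lemma cos_arg_mul (a b : ℂ) : Real.cos (a.arg - b.arg) * (‖a‖ * ‖b‖)
    = a.re * b.re + a.im * b.im := by
  rw [Real.cos_sub]
  linear_combination (‖b‖ * Real.cos b.arg) * (Complex.norm_mul_cos_arg a)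
    + a.re * (Complex.norm_mul_cos_arg b)
    + (‖b‖ * Real.sin b.arg) * (Complex.norm_mul_sin_arg a)
    + a.im * (Complex.norm_mul_sin_arg b)

lemma inner_le (a b : ℂ) {d : ℝ} (hd0 : 0 ≤ d) (hd : d ≤ ‖a - b‖) :
    a.re * b.re + a.im * b.im ≤ ((‖a‖)^2 + (‖b‖)^2 - d^2) / 2 := by
  have ha2 : (‖a‖)^2 = a.re^2 + a.im^2 := by
    rw [Complex.sq_norm, Complex.normSq_apply]; ring
  have hb2 : (‖b‖)^2 = b.re^2 + b.im^2 := by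
    rw [Complex.sq_norm, Complex.normSq_apply]; ring
  have hd2 : d^2 ≤ (‖a-b‖)^2 := pow_le_pow_left₀ hd0 hd 2
  have hab2 : (‖a-b‖)^2 = (a.re - b.re)^2 + (a.im - b.im)^2 := by
    rw [Complex.sq_norm, Complex.normSq_apply]; simp; ring
  nlinarith [hd2, hab2, ha2, hb2]

lemma cos_le_of_inner {a b : ℂ} {c : ℝ}
    (hpos : 0 < ‖a‖ * ‖b‖)
    (hS : a.re * b.re + a.im * b.im ≤ c * (‖a‖ * ‖b‖)) :
    Real.cos (a.arg - b.arg) ≤ c := by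
  have h := cos_arg_mul a b
  nlinarith [h, hS]

lemma key1 {a b : ℂ} (hA : 1 ≤ ‖a‖) (hA' : ‖a‖ ≤ 1.22)
    (hB : 1 ≤ ‖b‖) (hB' : ‖b‖ ≤ 1.22)
    (hd : (1/1.409 : ℝ) ≤ ‖a - b‖) :
    Real.cos (a.arg - b.arg) ≤ 0.8315 := by
  have hS := inner_le a b (by norm_num) hd
  apply cos_le_of_inner (by nlinarith)
  refine hS.trans ?_
  set A := ‖a‖; set B := ‖b‖
  nlinarith [mul_nonneg (sub_nonneg.2 hA') (sub_nonneg.2 hB'),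
    mul_nonneg (sub_nonneg.2 hA) (sub_nonneg.2 hB),
    mul_nonneg (sub_nonneg.2 hA') (sub_nonneg.2 hB),
    mul_nonneg (sub_nonneg.2 hA) (sub_nonneg.2 hB'),
    sq_nonneg (A - B)]

lemma key2 {a b : ℂ} (hA : 1.409 ≤ ‖a‖) (hA' : ‖a‖ ≤ 1.85)
    (hB : 1 ≤ ‖b‖) (hB' : ‖b‖ ≤ 1.22)
    (hd : (1.409 : ℝ) ≤ ‖a - b‖) :
    Real.cos (a.arg - b.arg) ≤ 0.681 := by
  have hS := inner_le a b (by norm_num) hd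
  apply cos_le_of_inner (by nlinarith)
  refine hS.trans ?_
  set A := ‖a‖; set B := ‖b‖
  nlinarith [mul_nonneg (sub_nonneg.2 hA') (sub_nonneg.2 hB'),
    mul_nonneg (sub_nonneg.2 hA) (sub_nonneg.2 hB),
    mul_nonneg (sub_nonneg.2 hA') (sub_nonneg.2 hB),
    mul_nonneg (sub_nonneg.2 hA) (sub_nonneg.2 hB'),
    sq_nonneg (A - B)]


lemma cos_lb1 : (0.8315:ℝ) ≤ Real.cos 0.581 := by
  have h4 : 1 - (0.581/4)^2/2 ≤ Real.cos (0.581/4) := Real.one_sub_sq_div_two_le_cos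
  have hm : (0.98945:ℝ) ≤ Real.cos (0.581/4) := by nlinarith
  have e2 : Real.cos (0.581/2) = 2 * Real.cos (0.581/4)^2 - 1 := by
    rw [← Real.cos_two_mul]; norm_num
  have h2 : (0.9578:ℝ) ≤ Real.cos (0.581/2) := by
    rw [e2]; nlinarith [sq_nonneg (Real.cos (0.581/4) - 0.98945)]
  have e1 : Real.cos 0.581 = 2 * Real.cos (0.581/2)^2 - 1 := by
    rw [← Real.cos_two_mul]; norm_num
  rw [e1]; nlinarith [sq_nonneg (Real.cos (0.581/2) - 0.9578)]

lemma cos_lb2 : (0.681:ℝ) ≤ Real.cos 0.82 := by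
  have h4 : 1 - (0.82/4)^2/2 ≤ Real.cos (0.82/4) := Real.one_sub_sq_div_two_le_cos
  have hm : (0.9789875:ℝ) ≤ Real.cos (0.82/4) := by nlinarith
  have e2 : Real.cos (0.82/2) = 2 * Real.cos (0.82/4)^2 - 1 := by
    rw [← Real.cos_two_mul]; norm_num
  have h2 : (0.91683:ℝ) ≤ Real.cos (0.82/2) := by
    rw [e2]; nlinarith [sq_nonneg (Real.cos (0.82/4) - 0.9789875)]
  have e1 : Real.cos 0.82 = 2 * Real.cos (0.82/2)^2 - 1 := by
    rw [← Real.cos_two_mul]; norm_num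
  rw [e1]; nlinarith [sq_nonneg (Real.cos (0.82/2) - 0.91683)]


/-- Impossible: one point Y with p ≤ |Y| ≤ 1.85 and nine points Xᵢ with
1 ≤ |Xᵢ| ≤ 1.22, pairwise X-distances ≥ q = 1/p and dist(Y, Xᵢ) ≥ p = 1.409. -/
theorem stmt_10 (Y : EuclideanSpace ℝ (Fin 2)) (X : Fin 9 → EuclideanSpace ℝ (Fin 2))
    (hY : (1.409 : ℝ) ≤ ‖Y‖ ∧ ‖Y‖ ≤ 1.85)
    (hX : ∀ i, (1 : ℝ) ≤ ‖X i‖ ∧ ‖X i‖ ≤ 1.22)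
    (hXX : ∀ i j, i ≠ j → (1 / 1.409 : ℝ) ≤ dist (X i) (X j))
    (hYX : ∀ i, (1.409 : ℝ) ≤ dist Y (X i)) : False := by
  classical
  set w : Fin 10 → ℂ := Fin.cons (cpx Y) (fun i => cpx (X i)) with hw
  have e0 : w 0 = cpx Y := rfl
  have es : ∀ j : Fin 9, w j.succ = cpx (X j) := fun j => by simp [hw]

  have hpair : ∀ a b : Fin 10, a ≠ b →
      Real.cos ((w a).arg - (w b).arg) ≤ (if a = 0 ∨ b = 0 then (0.681:ℝ) else 0.8315) := by
    intro a b hab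
    induction a using Fin.cases with
    | zero =>
      induction b using Fin.cases with
      | zero => exact absurd rfl hab
      | succ j =>
        rw [if_pos (Or.inl rfl)]
        apply key2 (a := w 0) (b := w j.succ)
        · rw [e0, cpx_abs]; exact hY.1
        · rw [e0, cpx_abs]; exact hY.2
        · rw [es j, cpx_abs]; exact (hX j).1
        · rw [es j, cpx_abs]; exact (hX j).2
        · rw [e0, es j, cpx_dist]; exact hYX j
    | succ i =>
      induction b using Fin.cases with
      | zero =>
        rw [if_pos (Or.inr rfl), ← Real.cos_neg, neg_sub]
        apply key2 (a := w 0) (b := w i.succ)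
        · rw [e0, cpx_abs]; exact hY.1
        · rw [e0, cpx_abs]; exact hY.2
        · rw [es i, cpx_abs]; exact (hX i).1
        · rw [es i, cpx_abs]; exact (hX i).2
        · rw [e0, es i, cpx_dist]; exact hYX i
      | succ j =>
        rw [if_neg (by simp [Fin.succ_ne_zero])]
        have hij : i ≠ j := fun h => hab (by rw [h])
        apply key1 (a := w i.succ) (b := w j.succ)
        · rw [es i, cpx_abs]; exact (hX i).1
        · rw [es i, cpx_abs]; exact (hX i).2
        · rw [es j, cpx_abs]; exact (hX j).1
        · rw [es j, cpx_abs]; exact (hX j).2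
        · rw [es i, es j, cpx_dist]; exact hXX i j hij

  set θ : Fin 10 → ℝ := fun i => (w i).arg with hθ
  set σ : Equiv.Perm (Fin 10) := Tuple.sort θ with hσ
  have hmono : Monotone (θ ∘ σ) := Tuple.monotone_sort θ
  set φ : Fin 10 → ℝ := θ ∘ σ with hφ
  set G : Fin 10 → ℝ := fun k => φ (k+1) - φ k + (if k = (9 : Fin 10) then 2*π else 0) with hG
  have hsum : ∑ k, G k = 2*π := by
    have h1 : ∑ k : Fin 10, φ (k+1) = ∑ k, φ k :=
      Equiv.sum_comp (Equiv.addRight (1 : Fin 10)) φ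
    simp only [hG]
    rw [Finset.sum_add_distrib, Finset.sum_sub_distrib, h1]
    simp
  have hne : ∀ k : Fin 10, σ (k+1) ≠ σ k := by
    intro k h
    have h2 := σ.injective h
    have h3 := congrArg Fin.val h2
    simp [Fin.add_def] at h3
    omega
  set A : Fin 10 → ℝ := fun k => if σ (k+1) = 0 ∨ σ k = 0 then (0.82:ℝ) else 0.581 with hA
  have hGge : ∀ k, A k ≤ G k := by
    intro k
    have hcos : Real.cos (G k) ≤ (if σ (k+1) = 0 ∨ σ k = 0 then (0.681:ℝ) else 0.8315) := by
      have h := hpair (σ (k+1)) (σ k) (hne k)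
      by_cases hk : k = (9 : Fin 10)
      · simp only [hG, if_pos hk, Real.cos_add_two_pi]
        exact h
      · simp only [hG, if_neg hk, add_zero]
        exact h
    have hG0 : 0 ≤ G k := by
      by_cases hk : k = (9 : Fin 10)
      · have h1 : -π < φ (k+1) := Complex.neg_pi_lt_arg _
        have h2 : φ k ≤ π := Complex.arg_le_pi _
        simp only [hG, if_pos hk]
        linarith
      · have hk1 : k ≤ k + 1 := by
          have hv : k.val < 9 := by
            rcases Fin.lt_or_eq_of_le (Fin.le_last k) with h | h
            · simpa [Fin.lt_def] using h
            · exact absurd h hk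
          rw [Fin.le_def]
          simp [Fin.add_def]
          omega
        have := hmono hk1
        simp only [hG, if_neg hk, add_zero]
        simpa using this
    by_contra hlt
    push_neg at hlt
    have hpi : (3.1415:ℝ) < π := by linarith [Real.pi_gt_d6]
    by_cases hc : σ (k+1) = 0 ∨ σ k = 0
    · simp only [hA, if_pos hc] at hlt
      rw [if_pos hc] at hcos
      have h2 : Real.cos (0.82:ℝ) < Real.cos (G k) :=
        Real.cos_lt_cos_of_nonneg_of_le_pi hG0 (by norm_num; linarith) hlt
      linarith [cos_lb2]
    · simp only [hA, if_neg hc] at hlt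
      rw [if_neg hc] at hcos
      have h2 : Real.cos (0.581:ℝ) < Real.cos (G k) :=
        Real.cos_lt_cos_of_nonneg_of_le_pi hG0 (by norm_num; linarith) hlt
      linarith [cos_lb1]
  have hAeq : ∀ k, A k = 0.581 + (if σ (k+1) = 0 then (0.239:ℝ) else 0)
      + (if σ k = 0 then (0.239:ℝ) else 0) := by
    intro k
    by_cases h1 : σ (k+1) = 0 <;> by_cases h2 : σ k = 0
    · exact absurd (h1.trans h2.symm) (hne k)
    · simp [hA, h1, h2]; try norm_num
    · simp [hA, h1, h2]; try norm_num
    · simp [hA, h1, h2]; try norm_num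
  have e1 : ∑ k : Fin 10, (if σ k = 0 then (0.239:ℝ) else 0) = 0.239 := by
    rw [Equiv.sum_comp σ (fun j => if j = 0 then (0.239:ℝ) else 0)]
    simp
  have e2 : ∑ k : Fin 10, (if σ (k+1) = 0 then (0.239:ℝ) else 0) = 0.239 := by
    have h := Equiv.sum_comp (Equiv.addRight (1 : Fin 10))
      (fun j => if σ j = 0 then (0.239:ℝ) else 0)
    simp only [Equiv.coe_addRight] at h
    exact h.trans e1
  have hsumA : ∑ k, A k = 6.288 := by
    calc ∑ k, A k = ∑ k : Fin 10, (0.581 + (if σ (k+1) = 0 then (0.239:ℝ) else 0)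
        + (if σ k = 0 then (0.239:ℝ) else 0)) := by
          exact Finset.sum_congr rfl (fun k _ => hAeq k)
      _ = 6.288 := by
          rw [Finset.sum_add_distrib, Finset.sum_add_distrib, e1, e2]
          norm_num
  have hfin : (6.288:ℝ) ≤ 2*π := by
    rw [← hsumA, ← hsum]
    exact Finset.sum_le_sum (fun k _ => hGge k)
  linarith [Real.pi_lt_d6]
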